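/- Let D ∈ ℂ^{d×d} be a diagonal matrix each of whose diagonal entries has modulus at most 1, and let δ ∈ (0,1) be such that every diagonal entry of D that is not equal to 1 has modulus at most δ. Let {B_t} ⊂ ℂ^{d×d} satisfy Σ_{t=0}^∞ ‖B_t‖₂ < ∞, and define X_{t+1} = (D + B_t) X_t for a given X_0 ∈ ℂ^d. Then there exists a constant C > 0 such that for all t ≥ 0, ‖(D − I) X_t‖₂ ≤ C · max{ δ^{t/2}, Σ_{l ≥ ⌊t/2⌋} ‖B_l‖₂ }. In particular ‖(D − I) X_t‖₂ → 0 as t → ∞. -/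

import Mathlib

open Matrix Filter

/-- Euclidean norm of a complex vector. -/
noncomputable def cvnorm2 {ι : Type*} [Fintype ι] (v : ι → ℂ) : ℝ :=
  Real.sqrt (∑ i, ‖v i‖ ^ 2)

/-- Spectral (operator 2-)norm of a complex matrix. -/
noncomputable def cmnorm2 {ι κ : Type*} [Fintype ι] [Fintype κ] [DecidableEq κ]
    (M : Matrix ι κ ℂ) : ℝ :=
  ‖LinearMap.toContinuousLinearMap (Matrix.toEuclideanLin M)‖

lemma cvnorm2_eq {d : ℕ} (v : Fin d → ℂ) :
    cvnorm2 v = ‖(WithLp.equiv 2 (Fin d → ℂ)).symm v‖ := by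
  rw [EuclideanSpace.norm_eq]
  simp [cvnorm2]

lemma cvnorm2_nonneg {d : ℕ} (v : Fin d → ℂ) : 0 ≤ cvnorm2 v := Real.sqrt_nonneg _

lemma cvnorm2_add_le {d : ℕ} (u v : Fin d → ℂ) :
    cvnorm2 (u + v) ≤ cvnorm2 u + cvnorm2 v := by
  simp only [cvnorm2_eq]
  rw [show (WithLp.equiv 2 (Fin d → ℂ)).symm (u + v)
      = (WithLp.equiv 2 (Fin d → ℂ)).symm u + (WithLp.equiv 2 (Fin d → ℂ)).symm v from rfl]
  exact norm_add_le _ _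

lemma cvnorm2_mulVec_le {d : ℕ} (M : Matrix (Fin d) (Fin d) ℂ) (v : Fin d → ℂ) :
    cvnorm2 (M.mulVec v) ≤ cmnorm2 M * cvnorm2 v := by
  rw [cvnorm2_eq, cvnorm2_eq]
  have h := (LinearMap.toContinuousLinearMap (Matrix.toEuclideanLin M)).le_opNorm
    ((WithLp.equiv 2 (Fin d → ℂ)).symm v)
  have he : (LinearMap.toContinuousLinearMap (Matrix.toEuclideanLin M))
      ((WithLp.equiv 2 (Fin d → ℂ)).symm v)
      = (WithLp.equiv 2 (Fin d → ℂ)).symm (M.mulVec v) := by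
    simp [Matrix.toLin'_apply]
  rw [he] at h
  exact h

lemma abs_apply_le_cvnorm2 {d : ℕ} (v : Fin d → ℂ) (i : Fin d) :
    ‖v i‖ ≤ cvnorm2 v := by
  have h1 : ‖v i‖ = Real.sqrt (‖v i‖ ^ 2) := by
    rw [Real.sqrt_sq (norm_nonneg _)]
  rw [h1, cvnorm2]
  exact Real.sqrt_le_sqrt (Finset.single_le_sum (f := fun j => ‖v j‖ ^ 2)
    (fun j _ => sq_nonneg _) (Finset.mem_univ i))

lemma cvnorm2_le_sqrt_card {d : ℕ} (v : Fin d → ℂ) (r : ℝ) (hr : 0 ≤ r)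
    (h : ∀ i, ‖v i‖ ≤ r) : cvnorm2 v ≤ Real.sqrt d * r := by
  rw [show Real.sqrt d * r = Real.sqrt (d * r ^ 2) from by
    rw [Real.sqrt_mul (Nat.cast_nonneg d), Real.sqrt_sq hr], cvnorm2]
  apply Real.sqrt_le_sqrt
  calc ∑ i, ‖v i‖ ^ 2 ≤ ∑ _i : Fin d, r ^ 2 :=
        Finset.sum_le_sum fun i _ => by
          have h1 := h i; have h2 := norm_nonneg (v i); nlinarith
    _ = d * r ^ 2 := by simp [Finset.sum_const, nsmul_eq_mul]

lemma isDiag_mulVec_apply {d : ℕ} {M : Matrix (Fin d) (Fin d) ℂ} (h : M.IsDiag)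
    (v : Fin d → ℂ) (i : Fin d) : M.mulVec v i = M i i * v i := by
  rw [Matrix.mulVec, dotProduct]
  rw [Finset.sum_eq_single i (fun j _ hj => by rw [h (Ne.symm hj), zero_mul])
    (fun hi => absurd (Finset.mem_univ i) hi)]

lemma isDiag_mulVec_norm_le {d : ℕ} {M : Matrix (Fin d) (Fin d) ℂ} (h : M.IsDiag)
    {c : ℝ} (hc : 0 ≤ c) (hm : ∀ i, ‖M i i‖ ≤ c) (v : Fin d → ℂ) :
    cvnorm2 (M.mulVec v) ≤ c * cvnorm2 v := by
  rw [cvnorm2, cvnorm2, show c * Real.sqrt (∑ i, ‖v i‖ ^ 2)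
      = Real.sqrt (∑ i, c ^ 2 * ‖v i‖ ^ 2) from by
    rw [← Finset.mul_sum, Real.sqrt_mul (sq_nonneg c), Real.sqrt_sq hc]]
  apply Real.sqrt_le_sqrt
  apply Finset.sum_le_sum
  intro i _
  rw [isDiag_mulVec_apply h, norm_mul, mul_pow]
  exact mul_le_mul_of_nonneg_right (pow_le_pow_left₀ (norm_nonneg _) (hm i) 2)
    (sq_nonneg _)

/-- Let `D` be a complex diagonal matrix with all diagonal entries of modulus `≤ 1` and with
every diagonal entry `≠ 1` of modulus `≤ δ` for some `δ ∈ (0,1)`. If `Σ_t ‖B_t‖₂ < ∞` and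
`X_{t+1} = (D + B_t) X_t`, then there is `C > 0` with
`‖(D − I) X_t‖₂ ≤ C·max{δ^{t/2}, Σ_{l ≥ ⌊t/2⌋} ‖B_l‖₂}` for all `t`;
in particular `‖(D − I) X_t‖₂ → 0`. -/
theorem stmt18 {d : ℕ} (D : Matrix (Fin d) (Fin d) ℂ) (hdiag : D.IsDiag)
    (hmod : ∀ i, ‖D i i‖ ≤ 1)
    (δ : ℝ) (hδ : δ ∈ Set.Ioo (0 : ℝ) 1)
    (hgap : ∀ i, D i i ≠ 1 → ‖D i i‖ ≤ δ)
    (B : ℕ → Matrix (Fin d) (Fin d) ℂ) (hB : Summable fun t => cmnorm2 (B t))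
    (X : ℕ → (Fin d → ℂ))
    (hX : ∀ t, X (t + 1) = (D + B t).mulVec (X t)) :
    ∃ C > (0 : ℝ),
      (∀ t : ℕ, cvnorm2 ((D - 1).mulVec (X t)) ≤
          C * max (δ ^ ((t : ℝ) / 2)) (∑' l : ℕ, cmnorm2 (B (t / 2 + l)))) ∧
      Tendsto (fun t => cvnorm2 ((D - 1).mulVec (X t))) atTop (nhds 0) := by
  obtain ⟨hδ0, hδ1⟩ := hδ
  set b : ℕ → ℝ := fun t => cmnorm2 (B t) with hbdef
  have hb0 : ∀ t, 0 ≤ b t := fun t => norm_nonneg _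
  set S : ℝ := ∑' t, b t with hSdef
  -- step bound
  have hstep : ∀ t, cvnorm2 (X (t + 1)) ≤ (1 + b t) * cvnorm2 (X t) := by
    intro t
    rw [hX t, Matrix.add_mulVec]
    calc cvnorm2 (D.mulVec (X t) + (B t).mulVec (X t))
        ≤ cvnorm2 (D.mulVec (X t)) + cvnorm2 ((B t).mulVec (X t)) := cvnorm2_add_le _ _
      _ ≤ 1 * cvnorm2 (X t) + b t * cvnorm2 (X t) :=
          add_le_add (isDiag_mulVec_norm_le hdiag zero_le_one hmod _)
            (cvnorm2_mulVec_le _ _)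
      _ = (1 + b t) * cvnorm2 (X t) := by ring
  -- global bound K
  set K : ℝ := cvnorm2 (X 0) * Real.exp S with hKdef
  have hKnn : 0 ≤ K := mul_nonneg (cvnorm2_nonneg _) (Real.exp_pos S).le
  have hXK : ∀ t, cvnorm2 (X t) ≤ K := by
    intro t
    have h1 : cvnorm2 (X t) ≤ cvnorm2 (X 0) * ∏ k ∈ Finset.range t, (1 + b k) := by
      induction t with
      | zero => simp
      | succ n ih =>
        rw [Finset.prod_range_succ]
        calc cvnorm2 (X (n + 1)) ≤ (1 + b n) * cvnorm2 (X n) := hstep n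
          _ ≤ (1 + b n) * (cvnorm2 (X 0) * ∏ k ∈ Finset.range n, (1 + b k)) :=
              mul_le_mul_of_nonneg_left ih (by linarith [hb0 n])
          _ = cvnorm2 (X 0) * ((∏ k ∈ Finset.range n, (1 + b k)) * (1 + b n)) := by ring
    have h2 : ∏ k ∈ Finset.range t, (1 + b k) ≤ Real.exp S :=
      calc ∏ k ∈ Finset.range t, (1 + b k) ≤ ∏ k ∈ Finset.range t, Real.exp (b k) :=
            Finset.prod_le_prod (fun k _ => by linarith [hb0 k])
              (fun k _ => by linarith [Real.add_one_le_exp (b k)])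
        _ = Real.exp (∑ k ∈ Finset.range t, b k) := (Real.exp_sum _ _).symm
        _ ≤ Real.exp S := Real.exp_le_exp.mpr (Summable.sum_le_tsum _ (fun k _ => hb0 k) hB)
    calc cvnorm2 (X t) ≤ cvnorm2 (X 0) * ∏ k ∈ Finset.range t, (1 + b k) := h1
      _ ≤ K := mul_le_mul_of_nonneg_left h2 (cvnorm2_nonneg _)
  -- core componentwise decay bound
  have hcomp : ∀ i, ‖D i i‖ ≤ δ → ∀ s t : ℕ, s ≤ t →
      ‖X t i‖ ≤ δ ^ (t - s) * K + ∑ k ∈ Finset.Ico s t, b k * K := by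
    intro i hi s t
    induction t with
    | zero =>
      intro hst
      have hs0 : s = 0 := Nat.le_zero.mp hst
      subst hs0
      simpa using le_trans (abs_apply_le_cvnorm2 (X 0) i) (hXK 0)
    | succ n ih =>
      intro hst
      rcases Nat.lt_or_ge s (n + 1) with h | h
      · have hsn : s ≤ n := Nat.lt_succ_iff.mp h
        have hXsucc : X (n + 1) i = D i i * X n i + (B n).mulVec (X n) i := by
          rw [hX n, Matrix.add_mulVec, Pi.add_apply, isDiag_mulVec_apply hdiag]
        have hw : ‖(B n).mulVec (X n) i‖ ≤ b n * K :=
          le_trans (abs_apply_le_cvnorm2 _ _)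
            (le_trans (cvnorm2_mulVec_le _ _) (mul_le_mul_of_nonneg_left (hXK n) (hb0 n)))
        have hsum : (0:ℝ) ≤ ∑ k ∈ Finset.Ico s n, b k * K :=
          Finset.sum_nonneg fun k _ => mul_nonneg (hb0 k) hKnn
        calc ‖X (n + 1) i‖
            ≤ ‖D i i * X n i‖ + ‖(B n).mulVec (X n) i‖ := by
              rw [hXsucc]; exact norm_add_le _ _
          _ ≤ δ * ‖X n i‖ + b n * K := by
              rw [norm_mul]
              exact add_le_add (mul_le_mul hi le_rfl (norm_nonneg _) hδ0.le) hw
          _ ≤ δ * (δ ^ (n - s) * K + ∑ k ∈ Finset.Ico s n, b k * K) + b n * K :=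
              add_le_add (mul_le_mul_of_nonneg_left (ih hsn) hδ0.le) le_rfl
          _ ≤ δ ^ (n + 1 - s) * K + ∑ k ∈ Finset.Ico s (n + 1), b k * K := by
              rw [Finset.sum_Ico_succ_top hsn, show n + 1 - s = (n - s) + 1 from by omega,
                pow_succ]
              have hds : δ * (∑ k ∈ Finset.Ico s n, b k * K) ≤ ∑ k ∈ Finset.Ico s n, b k * K :=
                mul_le_of_le_one_left hsum hδ1.le
              nlinarith [pow_nonneg hδ0.le (n - s)]
      · have hs1 : s = n + 1 := le_antisymm hst h
        subst hs1
        simpa using le_trans (abs_apply_le_cvnorm2 (X (n + 1)) i) (hXK (n + 1))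
  -- tail sums
  set T : ℕ → ℝ := fun t => ∑' l, b (t / 2 + l) with hTdef
  have hsummT : ∀ s : ℕ, Summable fun l => b (s + l) := by
    intro s
    exact ((summable_nat_add_iff s).mpr hB).congr (fun n => by rw [add_comm])
  have hT0' : ∀ t, 0 ≤ T t := fun t => tsum_nonneg (fun l => hb0 _)
  -- main bound
  set C : ℝ := 4 * (Real.sqrt d + 1) * (K + 1) with hCdef
  have hCpos : 0 < C := by
    have := Real.sqrt_nonneg (d : ℝ)
    nlinarith
  have hmain : ∀ t : ℕ, cvnorm2 ((D - 1).mulVec (X t)) ≤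
      C * max (δ ^ ((t : ℝ) / 2)) (T t) := by
    intro t
    set m := max (δ ^ ((t : ℝ) / 2)) (T t) with hmdef
    have hm0 : 0 ≤ m := le_trans (Real.rpow_nonneg hδ0.le _) (le_max_left _ _)
    have hpow : δ ^ (t - t / 2) ≤ δ ^ ((t : ℝ) / 2) := by
      rw [← Real.rpow_natCast δ (t - t / 2)]
      apply Real.rpow_le_rpow_of_exponent_ge hδ0 hδ1.le
      have h1 : ((t / 2 : ℕ) : ℝ) ≤ (t : ℝ) / 2 := by
        rw [le_div_iff₀ (by norm_num : (0:ℝ) < 2)]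
        exact_mod_cast Nat.div_mul_le_self t 2
      have h2 : ((t - t / 2 : ℕ) : ℝ) = (t : ℝ) - ((t / 2 : ℕ) : ℝ) := by
        rw [Nat.cast_sub (Nat.div_le_self t 2)]
      rw [h2]; linarith
    have hsumT : ∑ k ∈ Finset.Ico (t / 2) t, b k ≤ T t := by
      rw [Finset.sum_Ico_eq_sum_range]
      exact Summable.sum_le_tsum _ (fun k _ => hb0 _) (hsummT (t / 2))
    -- componentwise bound
    have hcompb : ∀ i, ‖(D - 1).mulVec (X t) i‖ ≤ 4 * ((K + 1) * m) := by
      intro i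
      have hDi : (D - 1).IsDiag := hdiag.sub Matrix.isDiag_one
      rw [isDiag_mulVec_apply hDi]
      by_cases h1 : D i i = 1
      · have : (D - 1) i i = 0 := by
          simp [Matrix.sub_apply, h1]
        rw [this, zero_mul, norm_zero]
        positivity
      · have hDii : ‖D i i‖ ≤ δ := hgap i h1
        have hd1 : (D - 1) i i = D i i - 1 := by simp [Matrix.sub_apply]
        have habs2 : ‖(D - 1) i i‖ ≤ 2 := by
          rw [hd1, sub_eq_add_neg]
          calc ‖D i i + -1‖ ≤ ‖D i i‖ + ‖-1‖ :=
                norm_add_le _ _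
            _ ≤ 2 := by
                have h9 : ‖(-1 : ℂ)‖ = 1 := by simp
                rw [h9]; linarith [hmod i]
        have hXt : ‖X t i‖ ≤ 2 * ((K + 1) * m) := by
          have hb1 := hcomp i hDii (t / 2) t (Nat.div_le_self t 2)
          have hb2 : ∑ k ∈ Finset.Ico (t / 2) t, b k * K = (∑ k ∈ Finset.Ico (t / 2) t, b k) * K := by
            rw [Finset.sum_mul]
          have h3 : δ ^ (t - t / 2) * K ≤ m * K :=
            mul_le_mul_of_nonneg_right (le_trans hpow (le_max_left _ _)) hKnn
          have h4 : (∑ k ∈ Finset.Ico (t / 2) t, b k) * K ≤ m * K :=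
            mul_le_mul_of_nonneg_right (le_trans hsumT (le_max_right _ _)) hKnn
          calc ‖X t i‖ ≤ δ ^ (t - t / 2) * K + ∑ k ∈ Finset.Ico (t / 2) t, b k * K := hb1
            _ ≤ m * K + m * K := by rw [hb2]; exact add_le_add h3 h4
            _ ≤ 2 * ((K + 1) * m) := by nlinarith
        calc ‖(D - 1) i i * X t i‖
            = ‖(D - 1) i i‖ * ‖X t i‖ := norm_mul _ _
          _ ≤ 4 * ((K + 1) * m) := by
              have h6 := norm_nonneg ((D - 1) i i)
              have h5 : 0 ≤ (K + 1) * m := mul_nonneg (by linarith) hm0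
              have h7 := norm_nonneg (X t i)
              nlinarith
    calc cvnorm2 ((D - 1).mulVec (X t)) ≤ Real.sqrt d * (4 * ((K + 1) * m)) :=
          cvnorm2_le_sqrt_card _ _ (by nlinarith [hm0, hKnn]) hcompb
      _ ≤ C * m := by
          have hs := Real.sqrt_nonneg (d : ℝ)
          have h5 : 0 ≤ (K + 1) * m := mul_nonneg (by linarith) hm0
          rw [hCdef]; nlinarith
  refine ⟨C, hCpos, hmain, ?_⟩
  -- tendsto part
  have hd0 : Tendsto (fun t : ℕ => δ ^ ((t : ℝ) / 2)) atTop (nhds 0) := by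
    have heq : ∀ t : ℕ, δ ^ ((t : ℝ) / 2) = (δ ^ ((1 : ℝ) / 2)) ^ t := by
      intro t
      rw [← Real.rpow_natCast (δ ^ ((1 : ℝ) / 2)) t, ← Real.rpow_mul hδ0.le]
      congr 1; ring
    simp only [heq]
    exact tendsto_pow_atTop_nhds_zero_of_lt_one (Real.rpow_nonneg hδ0.le _)
      (Real.rpow_lt_one hδ0.le hδ1 (by norm_num))
  have hTt : Tendsto T atTop (nhds 0) := by
    have h1 : Tendsto (fun s : ℕ => ∑' l, b (l + s)) atTop (nhds 0) := tendsto_sum_nat_add b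
    have h2 : Tendsto (fun t : ℕ => t / 2) atTop atTop :=
      Filter.tendsto_atTop_atTop.mpr fun N => ⟨2 * N, fun t ht => by omega⟩
    have h3 := h1.comp h2
    have : T = (fun s : ℕ => ∑' l, b (l + s)) ∘ (fun t : ℕ => t / 2) := by
      funext t
      simp only [Function.comp_apply, hTdef]
      exact tsum_congr fun l => by rw [add_comm]
    rw [this]
    exact h3
  have hmax : Tendsto (fun t : ℕ => C * max (δ ^ ((t : ℝ) / 2)) (T t)) atTop (nhds 0) := by
    have h1 := hd0.max hTt
    rw [max_self] at h1
    have h2 := h1.const_mul C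
    simpa using h2
  exact squeeze_zero (fun t => cvnorm2_nonneg _) hmain hmax
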